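/- Let ν be a σ-finite Borel measure on ℝ and let ν̃ be the measure with dν̃(x) = e^{−x} dν(x). Let λ be Lebesgue measure on ℝ and set (Y, η) = (ℝ², λ × ν̃). Let Λ = R ⋊ Q act on Y by (r, q) · (x, y) = (r + e^q x, q + y), where Q ⊆ H_ν = {x : ν translated by x equals ν}. Then this action preserves the measure η. -/

import Mathlib

open MeasureTheory

/-- Pushing forward Lebesgue measure by `x ↦ r + e^q x` scales it by `e^{-q}`. -/
lemma aux_map_volume (r q : ℝ) :
    Measure.map (fun x : ℝ => r + Real.exp q * x) (volume : Measure ℝ)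
      = ENNReal.ofReal (Real.exp (-q)) • (volume : Measure ℝ) := by
  have h : (fun x : ℝ => r + Real.exp q * x)
      = (fun y : ℝ => r + y) ∘ (fun x : ℝ => Real.exp q * x) := rfl
  rw [h, ← Measure.map_map (measurable_const_add r)
      (measurable_const_mul (Real.exp q)),
    Real.map_volume_mul_left (Real.exp_ne_zero q), Measure.map_smul,
    map_add_left_eq_self volume r, ← Real.exp_neg, abs_of_pos (Real.exp_pos _)]

/-- Pushing forward `ν̃ = e^{-x} dν` by translation by `q` scales it by `e^q`,
provided translation by `q` preserves `ν`. -/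
lemma aux_map_withDensity (ν : Measure ℝ) (q : ℝ)
    (hq : Measure.map (fun y => y + q) ν = ν) :
    Measure.map (fun y : ℝ => q + y) (ν.withDensity fun x => ENNReal.ofReal (Real.exp (-x)))
      = ENNReal.ofReal (Real.exp q) •
        (ν.withDensity fun x => ENNReal.ofReal (Real.exp (-x))) := by
  ext s hs
  have hmeas : Measurable fun y : ℝ => q + y := measurable_const_add q
  rw [Measure.map_apply hmeas hs, withDensity_apply _ (hmeas hs),
    Measure.smul_apply, withDensity_apply _ hs, smul_eq_mul]
  conv_rhs => rw [← hq]
  rw [setLIntegral_map hs measurable_neg.exp.ennreal_ofReal (measurable_add_const q),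
    ← lintegral_const_mul (f := fun x : ℝ => ENNReal.ofReal (Real.exp (-(x + q)))) _ (((measurable_add_const q).neg.exp).ennreal_ofReal)]
  have hpre : (fun y : ℝ => y + q) ⁻¹' s = (fun y : ℝ => q + y) ⁻¹' s := by
    ext y; simp [add_comm]
  rw [hpre]
  refine setLIntegral_congr_fun (hmeas hs) (fun y _ => ?_)
  rw [← ENNReal.ofReal_mul (Real.exp_pos q).le, ← Real.exp_add]
  ring_nf

/-- Let `ν` be a σ-finite Borel measure on `ℝ`, `ν̃` the measure with
`dν̃(x) = e^{−x} dν(x)`, `λ` Lebesgue measure, and `η = λ × ν̃` on `ℝ²`.  For `r ∈ ℝ` and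
`q` in `H_ν` (i.e. translation by `q` preserves `ν`), the transformation
`(x, y) ↦ (r + e^q x, q + y)` preserves the measure `η`.  (These are exactly the
transformations defining the action of `Λ = R ⋊ Q`, `Q ⊆ H_ν`, on `(Y, η) = (ℝ², λ × ν̃)`.) -/
theorem affine_action_preserves_product_measure
    (ν : Measure ℝ) [SigmaFinite ν]
    (r q : ℝ) (hq : Measure.map (fun y => y + q) ν = ν) :
    MeasurePreserving (fun p : ℝ × ℝ => (r + Real.exp q * p.1, q + p.2))
      ((volume : Measure ℝ).prod (ν.withDensity fun x => ENNReal.ofReal (Real.exp (-x))))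
      ((volume : Measure ℝ).prod (ν.withDensity fun x => ENNReal.ofReal (Real.exp (-x)))) := by
  set ν' := ν.withDensity fun x => ENNReal.ofReal (Real.exp (-x)) with hν'
  have hf : Measurable fun x : ℝ => r + Real.exp q * x :=
    (measurable_const_mul _).const_add r
  have hg : Measurable fun y : ℝ => q + y := measurable_const_add q
  have hmeas : Measurable fun p : ℝ × ℝ => (r + Real.exp q * p.1, q + p.2) :=
    (hf.comp measurable_fst).prodMk (hg.comp measurable_snd)
  haveI : SigmaFinite ν' := by rw [hν']; infer_instance
  refine ⟨hmeas, ?_⟩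
  refine (Measure.prod_eq fun s t hs ht => ?_).symm
  rw [Measure.map_apply hmeas (hs.prod ht)]
  have hpre : (fun p : ℝ × ℝ => (r + Real.exp q * p.1, q + p.2)) ⁻¹' (s ×ˢ t)
      = ((fun x : ℝ => r + Real.exp q * x) ⁻¹' s) ×ˢ ((fun y : ℝ => q + y) ⁻¹' t) := rfl
  rw [hpre, Measure.prod_prod]
  have h1 : (volume : Measure ℝ) ((fun x : ℝ => r + Real.exp q * x) ⁻¹' s)
      = ENNReal.ofReal (Real.exp (-q)) * volume s := by
    rw [← Measure.map_apply hf hs, aux_map_volume, Measure.smul_apply, smul_eq_mul]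
  have h2 : ν' ((fun y : ℝ => q + y) ⁻¹' t) = ENNReal.ofReal (Real.exp q) * ν' t := by
    rw [← Measure.map_apply hg ht, hν', aux_map_withDensity ν q hq, Measure.smul_apply,
      smul_eq_mul]
  rw [h1, h2]
  rw [show ENNReal.ofReal (Real.exp (-q)) * volume s * (ENNReal.ofReal (Real.exp q) * ν' t)
      = (ENNReal.ofReal (Real.exp (-q)) * ENNReal.ofReal (Real.exp q)) * (volume s * ν' t)
      by ring,
    ← ENNReal.ofReal_mul (Real.exp_pos _).le, ← Real.exp_add, neg_add_cancel, Real.exp_zero,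
    ENNReal.ofReal_one, one_mul]
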